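/- arXiv:1010.4812 — 4 statements merged into one kernel-verified Lean document; each statement's English description precedes it below -/
import Mathlib

section
/- In the game of the previous context with L = n^M, the state where every player plays B_i has bottleneck congestion 1, the all-A_i Nash equilibrium has bottleneck congestion n, the total number of resources is |R| = nL + 1 = n^(M+1) + 1 (counting e and all private resources), and hence the price of anarchy is at least n = Ω(|R|^(1/(M+1))). -/
/-- Number of players using resource `r` in state `S`. -/
def congestion {P R : Type} [Fintype P] [DecidableEq R] (S : P → Finset R) (r : R) : ℕ :=
  (Finset.univ.filter (fun p => r ∈ S p)).card

/-- Bottleneck (maximum) congestion of a state. -/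
def bottleneck {P R : Type} [Fintype P] [Fintype R] [DecidableEq R]
    (S : P → Finset R) : ℕ :=
  Finset.univ.sup (congestion S)

/-- Strategy A_i: the single shared resource. -/
def stratA (n L : ℕ) (_i : Fin n) : Finset (Option (Fin n × Fin L)) := {none}

/-- Strategy B_i: player i's L private resources (pairwise disjoint across players). -/
def stratB (n L : ℕ) (i : Fin n) : Finset (Option (Fin n × Fin L)) :=
  Finset.univ.image (fun j : Fin L => some (i, j))

lemma congB (n L : ℕ) (r : Option (Fin n × Fin L)) :
    congestion (fun i : Fin n => stratB n L i) r ≤ 1 := by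
  unfold congestion
  match r with
  | none =>
      convert Nat.zero_le 1
      rw [Finset.card_eq_zero, Finset.filter_eq_empty_iff]
      intro p _
      simp [stratB]
  | some (i, j) =>
      apply Finset.card_le_one.mpr
      intro a ha b hb
      simp only [Finset.mem_filter, stratB, Finset.mem_image] at ha hb
      obtain ⟨-, _, _, ha⟩ := ha
      obtain ⟨-, _, _, hb⟩ := hb
      have : a = i := by injection ha with h; exact (Prod.mk.injEq .. ▸ h).1
      have hb' : b = i := by injection hb with h; exact (Prod.mk.injEq .. ▸ h).1
      rw [this, hb']

/-- With L = n^M: the all-B state has bottleneck congestion 1, the all-A Nash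
equilibrium has bottleneck congestion n, the number of resources is
|R| = nL + 1 = n^(M+1) + 1, and hence the price of anarchy is at least
n = |R - 1|^(1/(M+1)). -/
theorem stmt_6 (n M : ℕ) (hn : 0 < n) (L : ℕ) (hL : L = n ^ M) :
    bottleneck (fun i : Fin n => stratB n L i) = 1 ∧
    bottleneck (fun i : Fin n => stratA n L i) = n ∧
    Fintype.card (Option (Fin n × Fin L)) = n ^ (M + 1) + 1 ∧
    ((bottleneck (fun i : Fin n => stratA n L i) : ℝ) /
        (bottleneck (fun i : Fin n => stratB n L i) : ℝ)) =
      ((Fintype.card (Option (Fin n × Fin L)) : ℝ) - 1) ^ ((1 : ℝ) / ((M : ℝ) + 1)) := by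
  have hL0 : 0 < L := by rw [hL]; positivity
  have hB : bottleneck (fun i : Fin n => stratB n L i) = 1 := by
    apply le_antisymm
    · exact Finset.sup_le fun r _ => congB n L r
    · -- take player ⟨0⟩ and resource some (0,0)
      have i : Fin n := ⟨0, hn⟩
      have j : Fin L := ⟨0, hL0⟩
      calc 1 ≤ congestion (fun i' : Fin n => stratB n L i') (some (i, j)) := by
              rw [Nat.one_le_iff_ne_zero, ← Nat.pos_iff_ne_zero]
              apply Finset.card_pos.mpr
              exact ⟨i, by simp [congestion, stratB]⟩
        _ ≤ _ := Finset.le_sup (Finset.mem_univ _)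
  have hA : bottleneck (fun i : Fin n => stratA n L i) = n := by
    apply le_antisymm
    · apply Finset.sup_le
      intro r _
      calc congestion (fun i : Fin n => stratA n L i) r
          ≤ Finset.univ.card := Finset.card_filter_le _ _
        _ = n := Finset.card_univ.trans (Fintype.card_fin n)
    · calc n = congestion (fun i : Fin n => stratA n L i) none := by
              simp [congestion, stratA]
        _ ≤ _ := Finset.le_sup (Finset.mem_univ _)
  have hCard : Fintype.card (Option (Fin n × Fin L)) = n ^ (M + 1) + 1 := by
    simp [Fintype.card_option, hL, pow_succ, mul_comm]
  refine ⟨hB, hA, hCard, ?_⟩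
  rw [hA, hB, hCard]
  push_cast
  rw [add_sub_cancel_right]
  have : ((n : ℝ) ^ (M + 1) : ℝ) = (n : ℝ) ^ ((M : ℝ) + 1) := by
    rw [← Real.rpow_natCast (n : ℝ) (M + 1)]
    push_cast; ring_nf
  rw [this, ← Real.rpow_mul (by positivity), mul_one_div, div_self (by positivity), Real.rpow_one,
    div_one]
end

section
/- Every finite congestion game with resource delay functions d_r(k) = k^M (player cost = sum of delays of used resources) possesses a pure Nash equilibrium. -/
/-- Cost of player `p` in state `S` with polynomial delays of degree `M`. -/
def playerCost {P R : Type} [Fintype P] [DecidableEq R] (M : ℕ)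
    (S : P → Finset R) (p : P) : ℕ :=
  ∑ r ∈ S p, (congestion S r) ^ M

/-- `S` is a pure Nash equilibrium for the strategy sets `strat`. -/
def IsNash {P R : Type} [Fintype P] [DecidableEq P] [DecidableEq R] (M : ℕ)
    (strat : P → Finset (Finset R)) (S : P → Finset R) : Prop :=
  (∀ p, S p ∈ strat p) ∧
    ∀ p, ∀ T ∈ strat p,
      playerCost M S p ≤ ∑ r ∈ T, (congestion (Function.update S p T) r) ^ M

/-- Rosenthal's potential. -/
def Phi {P R : Type} [Fintype P] [Fintype R] [DecidableEq R] (M : ℕ)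
    (S : P → Finset R) : ℕ :=
  ∑ r : R, ∑ k ∈ Finset.range (congestion S r), (k + 1) ^ M

/-- Congestion of `r` ignoring player `p`. -/
def aux {P R : Type} [Fintype P] [DecidableEq P] [DecidableEq R]
    (p : P) (S : P → Finset R) (r : R) : ℕ :=
  ((Finset.univ.erase p).filter (fun q => r ∈ S q)).card

lemma congestion_eq_aux {P R : Type} [Fintype P] [DecidableEq P] [DecidableEq R]
    (p : P) (S : P → Finset R) (r : R) :
    congestion S r = aux p S r + (if r ∈ S p then 1 else 0) := by
  unfold congestion aux
  have h : (Finset.univ : Finset P) = insert p (Finset.univ.erase p) := by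
    simp [Finset.insert_erase]
  rw [h, Finset.filter_insert]
  by_cases hr : r ∈ S p
  · simp [hr, Finset.card_insert_of_notMem]
  · simp [hr]

lemma aux_update {P R : Type} [Fintype P] [DecidableEq P] [DecidableEq R]
    (p : P) (S : P → Finset R) (T : Finset R) (r : R) :
    aux p (Function.update S p T) r = aux p S r := by
  unfold aux
  congr 1
  apply Finset.filter_congr
  intro q hq
  rw [Function.update_of_ne (Finset.ne_of_mem_erase hq)]

lemma potential_exchange {P R : Type} [Fintype P] [DecidableEq P] [Fintype R] [DecidableEq R]
    (M : ℕ) (S : P → Finset R) (p : P) (T : Finset R) :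
    Phi M (Function.update S p T) + playerCost M S p =
      Phi M S + ∑ r ∈ T, (congestion (Function.update S p T) r) ^ M := by
  set S' := Function.update S p T with hS'
  have hc : ∀ r, congestion S r = aux p S r + (if r ∈ S p then 1 else 0) :=
    congestion_eq_aux p S
  have hc' : ∀ r, congestion S' r = aux p S r + (if r ∈ T then 1 else 0) := by
    intro r
    rw [congestion_eq_aux p S' r, aux_update, hS', Function.update_self]
  have hcost : playerCost M S p = ∑ r : R, (if r ∈ S p then (congestion S r) ^ M else 0) := by
    unfold playerCost
    rw [Finset.sum_ite_mem, Finset.univ_inter]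
  have hcost' : (∑ r ∈ T, (congestion S' r) ^ M)
      = ∑ r : R, (if r ∈ T then (congestion S' r) ^ M else 0) := by
    rw [Finset.sum_ite_mem, Finset.univ_inter]
  rw [hcost, hcost']
  unfold Phi
  rw [← Finset.sum_add_distrib, ← Finset.sum_add_distrib]
  apply Finset.sum_congr rfl
  intro r _
  have h1 := hc r
  have h2 := hc' r
  by_cases hs : r ∈ S p <;> by_cases ht : r ∈ T <;>
    simp only [hs, ht, if_true, if_false, add_zero] at h1 h2 ⊢ <;>
    rw [h1, h2] <;> simp [Finset.sum_range_succ]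

/-- Rosenthal's theorem for polynomial delays d_r(k) = k^M: every finite
congestion game (each player with a nonempty finite set of pure strategies over
a finite resource set) possesses a pure Nash equilibrium. -/
theorem stmt_7 {P R : Type} [Fintype P] [DecidableEq P] [Fintype R] [DecidableEq R]
    (M : ℕ) (strat : P → Finset (Finset R)) (hne : ∀ p, (strat p).Nonempty) :
    ∃ S : P → Finset R, IsNash M strat S := by
  classical
  set V : Finset (P → Finset R) :=
    Finset.univ.filter (fun S => ∀ p, S p ∈ strat p) with hV
  have hVne : V.Nonempty := by
    refine ⟨fun p => (hne p).choose, ?_⟩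
    simp only [hV, Finset.mem_filter, Finset.mem_univ, true_and]
    exact fun p => (hne p).choose_spec
  obtain ⟨S, hSV, hmin⟩ := V.exists_min_image (Phi M) hVne
  have hSval : ∀ p, S p ∈ strat p := by
    simpa [hV] using hSV
  refine ⟨S, hSval, ?_⟩
  intro p T hT
  have hS'V : Function.update S p T ∈ V := by
    simp only [hV, Finset.mem_filter, Finset.mem_univ, true_and]
    intro q
    by_cases hq : q = p
    · subst hq; simpa using hT
    · rw [Function.update_of_ne hq]; exact hSval q
  have hle : Phi M S ≤ Phi M (Function.update S p T) := hmin _ hS'V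
  have hex := potential_exchange M S p T
  omega
end

section
/- Let a_1 ≥ a_2 ≥ … ≥ a_k and b_1 ≤ b_2 ≤ … ≤ b_m be nonnegative integers with Σ_{j=1}^m (b_j + 1)^M ≥ Σ_{l=1}^k a_l^M. Then there exists a partition of {1,…,k} into consecutive blocks L_1,…,L_t and an assignment of intervals L*_1,…,L*_t of {1,…,m}, where consecutive intervals overlap in at most one index, such that for every j: Σ_{i ∈ L*_j} (b_i + 1)^M ≥ Σ_{l ∈ L_j} a_l^M, each index of {1,…,m} appears in at most two of the L*_j, and for each j either |L_j| = 1 or |L*_j| = 1. -/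
/-- A set of indices is an interval (order-convex set). -/
def IsInterval {α : Type*} [LinearOrder α] (s : Finset α) : Prop :=
  ∀ x ∈ s, ∀ z ∈ s, ∀ y, x ≤ y → y ≤ z → y ∈ s

namespace PMS

/-- Interval property for finsets of naturals. -/
def IsIntervalN (s : Finset ℕ) : Prop :=
  ∀ x ∈ s, ∀ z ∈ s, ∀ y, x ≤ y → y ≤ z → y ∈ s

lemma isIntervalN_Ico (a b : ℕ) : IsIntervalN (Finset.Ico a b) := by
  intro x hx z hz y h1 h2
  simp only [Finset.mem_Ico] at *
  omega

lemma isIntervalN_singleton (a : ℕ) : IsIntervalN ({a} : Finset ℕ) := by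
  intro x hx z hz y h1 h2
  simp only [Finset.mem_singleton] at *
  omega

lemma isIntervalN_empty : IsIntervalN (∅ : Finset ℕ) := by
  intro x hx
  exact absurd hx (Finset.notMem_empty x)

lemma inter_singleton_card_le (y : ℕ) (t : Finset ℕ) :
    (({y} : Finset ℕ) ∩ t).card ≤ 1 := by
  calc (({y} : Finset ℕ) ∩ t).card ≤ ({y} : Finset ℕ).card :=
        Finset.card_le_card Finset.inter_subset_left
    _ = 1 := Finset.card_singleton y

/-- Multiplicity budget for index `x` in state `(n, f, S)`. -/
def mu (n f : ℕ) (S : Finset ℕ) (x : ℕ) : ℕ :=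
  if x + 1 < n then 2 else if x + 1 = n then f else if x ∈ S then 1 else 0

/-- The data of a valid block decomposition for weights on `[l, k)`. -/
structure Good (k m : ℕ) (w c : ℕ → ℕ) (l n f : ℕ) (S : Finset ℕ)
    (bs : List (Finset ℕ × Finset ℕ)) : Prop where
  mem1 : ∀ B ∈ bs, ∀ x ∈ B.1, l ≤ x ∧ x < k
  int1 : ∀ B ∈ bs, IsIntervalN B.1
  int2 : ∀ B ∈ bs, IsIntervalN B.2
  mem2 : ∀ B ∈ bs, ∀ x ∈ B.2, x < m
  sums : ∀ B ∈ bs, B.1.sum w ≤ B.2.sum c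
  sing : ∀ B ∈ bs, B.1.card = 1 ∨ B.2.card = 1
  cover : ∀ x, l ≤ x → x < k → ∃ B ∈ bs, x ∈ B.1
  pw : List.Pairwise (fun B B' => Disjoint B.1 B'.1) bs
  ch : List.Chain' (fun B B' => (B.2 ∩ B'.2).card ≤ 1) bs
  cnt : ∀ x : ℕ, bs.countP (fun B => decide (x ∈ B.2)) ≤ mu n f S x
  hd : ∀ B ∈ bs.head?, B.2.card ≤ 1 ∨ ∀ x ∈ B.2, x < n

lemma good_nil {k m : ℕ} {w c : ℕ → ℕ} {l n f : ℕ} {S : Finset ℕ} (h : k ≤ l) :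
    Good k m w c l n f S [] where
  mem1 := by simp
  int1 := by simp
  int2 := by simp
  mem2 := by simp
  sums := by simp
  sing := by simp
  cover := fun x h1 h2 => absurd h1 (by omega)
  pw := List.Pairwise.nil
  ch := List.isChain_nil
  cnt := fun x => by simp [List.countP_nil]
  hd := by simp

lemma good_cons {k m : ℕ} {w c : ℕ → ℕ} {l n f l' n' f' : ℕ} {S S' T : Finset ℕ}
    {bs : List (Finset ℕ × Finset ℕ)}
    (hg : Good k m w c l' n' f' S' bs)
    (hll' : l < l') (hl'k : l' ≤ k)
    (hTm : ∀ x ∈ T, x < m) (hTint : IsIntervalN T)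
    (hsumT : (Finset.Ico l l').sum w ≤ T.sum c)
    (hcardT : l' = l + 1 ∨ T.card = 1)
    (hadj : ∀ B' ∈ bs.head?, (T ∩ B'.2).card ≤ 1)
    (hmu : ∀ x, (if x ∈ T then 1 else 0) + mu n' f' S' x ≤ mu n f S x)
    (hhead : T.card ≤ 1 ∨ ∀ x ∈ T, x < n) :
    Good k m w c l n f S ((Finset.Ico l l', T) :: bs) where
  mem1 := by
    intro B hB
    rcases List.mem_cons.1 hB with rfl | hB
    · intro x hx
      simp only [Finset.mem_Ico] at hx
      omega
    · intro x hx
      have := hg.mem1 B hB x hx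
      omega
  int1 := by
    intro B hB
    rcases List.mem_cons.1 hB with rfl | hB
    · exact isIntervalN_Ico l l'
    · exact hg.int1 B hB
  int2 := by
    intro B hB
    rcases List.mem_cons.1 hB with rfl | hB
    · exact hTint
    · exact hg.int2 B hB
  mem2 := by
    intro B hB
    rcases List.mem_cons.1 hB with rfl | hB
    · exact hTm
    · exact hg.mem2 B hB
  sums := by
    intro B hB
    rcases List.mem_cons.1 hB with rfl | hB
    · exact hsumT
    · exact hg.sums B hB
  sing := by
    intro B hB
    rcases List.mem_cons.1 hB with rfl | hB
    · rcases hcardT with h | h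
      · left
        simp only [Nat.card_Ico, h]
        omega
      · right; exact h
    · exact hg.sing B hB
  cover := by
    intro x h1 h2
    by_cases hx : x < l'
    · exact ⟨(Finset.Ico l l', T), List.mem_cons_self, by simp [Finset.mem_Ico]; omega⟩
    · obtain ⟨B, hB, hxB⟩ := hg.cover x (by omega) h2
      exact ⟨B, List.mem_cons_of_mem _ hB, hxB⟩
  pw := by
    refine List.pairwise_cons.2 ⟨?_, hg.pw⟩
    intro B' hB'
    rw [Finset.disjoint_left]
    intro x hx hx'
    have h1 : x < l' := by
      simp only [Finset.mem_Ico] at hx; omega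
    have h2 := hg.mem1 B' hB' x hx'
    omega
  ch := by
    refine List.isChain_cons.2 ⟨?_, hg.ch⟩
    intro B' hB'
    exact hadj B' hB'
  cnt := by
    intro x
    rw [List.countP_cons]
    have h1 := hg.cnt x
    have h2 := hmu x
    by_cases hx : x ∈ T <;> simp [hx] at h2 ⊢ <;> omega
  hd := by
    intro B hB
    simp only [List.head?_cons, Option.mem_def, Option.some.injEq] at hB
    subst hB
    exact hhead

/-- Largest `r ≤ k` with `l ≤ r` and `∑_{i ∈ [l, r)} w i ≤ cap`. -/
def runEnd (w : ℕ → ℕ) (k l cap : ℕ) : ℕ :=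
  Nat.findGreatest (fun r => l ≤ r ∧ (Finset.Ico l r).sum w ≤ cap) k

lemma runEnd_le (w : ℕ → ℕ) (k l cap : ℕ) : runEnd w k l cap ≤ k :=
  Nat.findGreatest_le k

lemma le_runEnd {w : ℕ → ℕ} {k l : ℕ} (cap : ℕ) (hlk : l ≤ k) :
    l ≤ runEnd w k l cap :=
  Nat.le_findGreatest hlk ⟨le_rfl, by simp⟩

lemma runEnd_sum_le {w : ℕ → ℕ} {k l : ℕ} (cap : ℕ) (hlk : l ≤ k) :
    (Finset.Ico l (runEnd w k l cap)).sum w ≤ cap := by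
  have hle : l ≤ runEnd w k l cap := le_runEnd (w := w) cap hlk
  rcases eq_or_lt_of_le hle with h | h
  · rw [← h]; simp
  · have h0 : runEnd w k l cap ≠ 0 := by omega
    unfold runEnd at h0 ⊢
    exact (Nat.findGreatest_of_ne_zero rfl h0).2

lemma runEnd_max {w : ℕ → ℕ} {k l cap : ℕ} (hlk : l ≤ k)
    (h : runEnd w k l cap < k) :
    cap < (Finset.Ico l (runEnd w k l cap)).sum w + w (runEnd w k l cap) := by
  have hle : l ≤ runEnd w k l cap := le_runEnd cap hlk
  have hmax : ¬ (l ≤ runEnd w k l cap + 1 ∧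
      (Finset.Ico l (runEnd w k l cap + 1)).sum w ≤ cap) :=
    Nat.findGreatest_is_greatest
      (P := fun r => l ≤ r ∧ (Finset.Ico l r).sum w ≤ cap) (n := k)
      (Nat.lt_succ_self _) (by omega)
  rw [not_and_or] at hmax
  rcases hmax with h1 | h2
  · omega
  · push_neg at h2
    rwa [Finset.sum_Ico_succ_top hle] at h2

lemma runEnd_ge_succ {w : ℕ → ℕ} {k l cap : ℕ} (hlk : l < k) (hw : w l ≤ cap) :
    l + 1 ≤ runEnd w k l cap := by
  apply Nat.le_findGreatest (by omega)
  constructor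
  · omega
  · rw [Nat.Ico_succ_singleton, Finset.sum_singleton]
    exact hw

lemma runEnd_eq_self {w : ℕ → ℕ} {k l cap : ℕ} (hlk : l < k) (hw : cap < w l) :
    runEnd w k l cap = l := by
  rw [runEnd, Nat.findGreatest_eq_iff]
  refine ⟨by omega, fun _ => ⟨le_rfl, by simp⟩, ?_⟩
  intro t hlt htk hP
  have hmem : l ∈ Finset.Ico l t := by simp [Finset.mem_Ico]; omega
  have : w l ≤ (Finset.Ico l t).sum w :=
    Finset.single_le_sum (fun i _ => Nat.zero_le _) hmem
  omega

lemma sum_Ico_pred {c : ℕ → ℕ} {a b : ℕ} (h : b = a + 1) :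
    (Finset.Ico a b).sum c = c a := by
  subst h
  rw [Nat.Ico_succ_singleton, Finset.sum_singleton]

lemma widePick {c : ℕ → ℕ} {n W : ℕ} (hW : W ≤ (Finset.Ico 0 n).sum c)
    (htop : (Finset.Ico (n - 1) n).sum c < W) :
    ∃ p, p + 2 ≤ n ∧ W ≤ (Finset.Ico p n).sum c ∧ (Finset.Ico (p + 1) n).sum c < W := by
  set p := Nat.findGreatest (fun q => W ≤ (Finset.Ico q n).sum c) n with hp
  have hple : p ≤ n := Nat.findGreatest_le n
  have hPp : W ≤ (Finset.Ico p n).sum c := by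
    have h0 : W ≤ (Finset.Ico 0 n).sum c := hW
    have hsp := Nat.findGreatest_spec (P := fun q => W ≤ (Finset.Ico q n).sum c)
      (Nat.zero_le n) h0
    rw [hp]
    exact hsp
  have h1 : p ≠ n := by
    intro h
    rw [h, Finset.Ico_self, Finset.sum_empty] at hPp
    omega
  have h2 : p ≠ n - 1 := by
    intro h
    rw [h] at hPp
    omega
  have h3 : ¬ W ≤ (Finset.Ico (p + 1) n).sum c :=
    Nat.findGreatest_is_greatest (P := fun q => W ≤ (Finset.Ico q n).sum c) (n := n)
      (by omega) (by omega)
  exact ⟨p, by omega, hPp, by omega⟩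

lemma aux (k m : ℕ) (w c : ℕ → ℕ)
    (hw : ∀ i j, i ≤ j → j < k → w j ≤ w i)
    (hc : ∀ i j, i ≤ j → j < m → c i ≤ c j)
    (hc1 : ∀ i, i < m → 1 ≤ c i) :
    ∀ N l n f S, k - l ≤ N → n ≤ m → (f = 1 ∨ f = 2) →
      (∀ r ∈ S, n ≤ r ∧ r < m) →
      (Finset.Ico l k).sum w ≤ (Finset.Ico 0 n).sum c →
      (f = 1 → S = ∅ → l < k →
        (Finset.Ico l k).sum w ≤ (Finset.Ico 0 (n - 1)).sum c
          + (Finset.Ico l (runEnd w k l (c (n - 1)))).sum w) →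
      ∃ bs, Good k m w c l n f S bs := by
  intro N
  induction N with
  | zero =>
    intro l n f S h0 _ _ _ _ _
    exact ⟨[], good_nil (by omega)⟩
  | succ N ih =>
    intro l n f S hN hnm hf hS inv1 inv2
    by_cases hlk : k ≤ l
    · exact ⟨[], good_nil hlk⟩
    push_neg at hlk
    have hf1le : 1 ≤ f := by rcases hf with h | h <;> omega
    have hf2le : f ≤ 2 := by rcases hf with h | h <;> omega
    have hlmem : l ∈ Finset.Ico l k := by simp only [Finset.mem_Ico]; omega
    have hAw : w l ≤ (Finset.Ico l k).sum w :=
      Finset.single_le_sum (fun i _ => Nat.zero_le _) hlmem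
    have hsplit1 : (Finset.Ico l (l + 1)).sum w + (Finset.Ico (l + 1) k).sum w
        = (Finset.Ico l k).sum w :=
      Finset.sum_Ico_consecutive w (by omega) (by omega)
    have hwl1 : (Finset.Ico l (l + 1)).sum w = w l := by
      rw [Nat.Ico_succ_singleton, Finset.sum_singleton]
    rcases Nat.eq_zero_or_pos n with hn0 | hn1
    · -- n = 0 : all remaining weights are zero
      subst hn0
      have hA0 : (Finset.Ico l k).sum w = 0 := by
        have : (Finset.Ico 0 0).sum c = 0 := by simp
        omega
      obtain ⟨bs, hbs⟩ := ih (l + 1) 0 f S (by omega) (by omega) hf hS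
        (by omega)
        (by intro _ _ _
            have : (Finset.Ico (l + 1) k).sum w = 0 := by omega
            rw [this]
            exact Nat.zero_le _)
      refine ⟨_, good_cons (T := ∅) hbs (by omega) (by omega) (by simp)
        isIntervalN_empty (by rw [hwl1]; simp; omega) (Or.inl rfl) (by simp) ?_
        (Or.inl (by simp))⟩
      intro x
      simp only [Finset.notMem_empty, if_false]
      omega
    -- n ≥ 1 from here on
    have hCsplit : (Finset.Ico 0 (n - 1)).sum c + (Finset.Ico (n - 1) n).sum c
        = (Finset.Ico 0 n).sum c :=
      Finset.sum_Ico_consecutive c (by omega) (by omega)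
    have hCtop : (Finset.Ico (n - 1) n).sum c = c (n - 1) :=
      sum_Ico_pred (by omega)
    by_cases hterm : (Finset.Ico l k).sum w ≤ c (n - 1)
    · -- terminal block
      refine ⟨_, good_cons (T := {n - 1}) (l' := k)
        (good_nil (n := 0) (f := 1) (S := (∅ : Finset ℕ)) le_rfl) hlk le_rfl
        (by intro x hx; simp only [Finset.mem_singleton] at hx; omega)
        (isIntervalN_singleton _)
        (by rw [Finset.sum_singleton]; exact hterm)
        (Or.inr (Finset.card_singleton _))
        (by simp) ?_ (Or.inl (by simp))⟩
      intro x
      by_cases hx : x ∈ S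
      · have hxb := hS x hx
        simp [mu, hx]
        all_goals first | omega | (split_ifs <;> omega)
      · simp [mu, hx]
        all_goals first | omega | (split_ifs <;> omega)
    push_neg at hterm
    by_cases hrun : w l ≤ c (n - 1)
    · -- run cases
      have hr1k : runEnd w k l (c (n - 1)) ≤ k := runEnd_le w k l _
      have hlr1 : l + 1 ≤ runEnd w k l (c (n - 1)) := runEnd_ge_succ hlk hrun
      set r1 := runEnd w k l (c (n - 1)) with hr1def
      have hS1 : (Finset.Ico l r1).sum w ≤ c (n - 1) := runEnd_sum_le _ (by omega)
      have hsplitr : (Finset.Ico l r1).sum w + (Finset.Ico r1 k).sum w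
          = (Finset.Ico l k).sum w :=
        Finset.sum_Ico_consecutive w (by omega) hr1k
      have hr1k' : r1 < k := by
        rcases eq_or_lt_of_le hr1k with h | h
        · exfalso
          rw [h] at hS1
          omega
        · exact h
      have hmax1 : c (n - 1) < (Finset.Ico l r1).sum w + w r1 :=
        runEnd_max (by omega) hr1k'
      have hwr1 : w r1 ≤ w l := hw l r1 (by omega) hr1k'
      rcases hf with hf1 | hf2
      · -- f = 1
        subst hf1
        by_cases hdir : (Finset.Ico r1 k).sum w ≤ (Finset.Ico 0 (n - 1)).sum c
        · -- direct descent
          obtain ⟨bs, hbs⟩ := ih r1 (n - 1) 2 S (by omega) (by omega) (Or.inr rfl)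
            (fun r hr => ⟨by have := (hS r hr).1; omega, (hS r hr).2⟩) hdir
            (by intro h; exact absurd h (by norm_num))
          refine ⟨_, good_cons (T := {n - 1}) hbs (by omega) hr1k
            (by intro x hx; simp only [Finset.mem_singleton] at hx; omega)
            (isIntervalN_singleton _)
            (by rw [Finset.sum_singleton]; exact hS1)
            (Or.inr (Finset.card_singleton _))
            (fun B' _ => inter_singleton_card_le _ _) ?_ (Or.inl (by simp))⟩
          intro x
          by_cases hx : x ∈ S
          · have hxb := hS x hx
            simp [mu, hx]
            all_goals first | omega | (split_ifs <;> omega)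
          · simp [mu, hx]
            all_goals first | omega | (split_ifs <;> omega)
        · -- pop a reserve
          have hSne : S.Nonempty := by
            rcases Finset.eq_empty_or_nonempty S with hSe | h
            · exfalso
              have h2 := inv2 rfl hSe hlk
              omega
            · exact h
          obtain ⟨r, hrS⟩ := hSne
          have hrb := hS r hrS
          have hwr1c : w r1 ≤ c r :=
            le_trans (le_trans hwr1 hrun) (hc (n - 1) r (by omega) hrb.2)
          have hr2k : runEnd w k r1 (c r) ≤ k := runEnd_le w k r1 _
          have hr1r2 : r1 + 1 ≤ runEnd w k r1 (c r) := runEnd_ge_succ hr1k' hwr1c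
          set r2 := runEnd w k r1 (c r) with hr2def
          have hS2 : (Finset.Ico r1 r2).sum w ≤ c r := runEnd_sum_le _ (by omega)
          have hwr1mem : r1 ∈ Finset.Ico r1 r2 := by
            simp only [Finset.mem_Ico]; omega
          have hwr1le : w r1 ≤ (Finset.Ico r1 r2).sum w :=
            Finset.single_le_sum (fun i _ => Nat.zero_le _) hwr1mem
          have hsplitr2 : (Finset.Ico r1 r2).sum w + (Finset.Ico r2 k).sum w
              = (Finset.Ico r1 k).sum w :=
            Finset.sum_Ico_consecutive w (by omega) hr2k
          obtain ⟨bs, hbs⟩ := ih r2 (n - 1) 2 (S.erase r) (by omega) (by omega)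
            (Or.inr rfl)
            (fun r' hr' => by
              have := hS r' (Finset.mem_of_mem_erase hr')
              exact ⟨by omega, this.2⟩)
            (by omega)
            (by intro h; exact absurd h (by norm_num))
          have g1 : Good k m w c r1 (n - 1) 2 S ((Finset.Ico r1 r2, {r}) :: bs) := by
            refine good_cons (T := {r}) hbs (by omega) hr2k
              (by intro x hx; simp only [Finset.mem_singleton] at hx; omega)
              (isIntervalN_singleton _)
              (by rw [Finset.sum_singleton]; exact hS2)
              (Or.inr (Finset.card_singleton _))
              (fun B' _ => inter_singleton_card_le _ _) ?_ (Or.inl (by simp))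
            intro x
            by_cases hx : x ∈ S
            · have hxb := hS x hx
              by_cases hxr : x = r
              · subst hxr
                simp [mu, hx, Finset.mem_erase]
                all_goals first | omega | (split_ifs <;> omega)
              · simp [mu, hx, hxr, Finset.mem_erase]
                all_goals first | omega | (split_ifs <;> omega)
            · have hxr : ¬ x = r := by rintro rfl; exact hx hrS
              simp [mu, hx, hxr, Finset.mem_erase]
              all_goals first | omega | (split_ifs <;> omega)
          refine ⟨_, good_cons (T := {n - 1}) g1 (by omega) (by omega)
            (by intro x hx; simp only [Finset.mem_singleton] at hx; omega)
            (isIntervalN_singleton _)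
            (by rw [Finset.sum_singleton]; exact hS1)
            (Or.inr (Finset.card_singleton _))
            (fun B' _ => inter_singleton_card_le _ _) ?_ (Or.inl (by simp))⟩
          intro x
          by_cases hx : x ∈ S
          · have hxb := hS x hx
            simp [mu, hx]
            all_goals first | omega | (split_ifs <;> omega)
          · simp [mu, hx]
            all_goals first | omega | (split_ifs <;> omega)
      · -- f = 2
        subst hf2
        obtain ⟨bs, hbs⟩ := ih r1 n 1 S (by omega) hnm (Or.inl rfl) hS
          (by omega)
          (by intro _ hSe hr1k2
              have hwr1' : w r1 ≤ c (n - 1) := le_trans hwr1 hrun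
              have hre : r1 + 1 ≤ runEnd w k r1 (c (n - 1)) :=
                runEnd_ge_succ hr1k2 hwr1'
              have hmem2 : r1 ∈ Finset.Ico r1 (runEnd w k r1 (c (n - 1))) := by
                simp only [Finset.mem_Ico]; omega
              have hge : w r1 ≤ (Finset.Ico r1 (runEnd w k r1 (c (n - 1)))).sum w :=
                Finset.single_le_sum (fun i _ => Nat.zero_le _) hmem2
              omega)
        refine ⟨_, good_cons (T := {n - 1}) hbs (by omega) hr1k
          (by intro x hx; simp only [Finset.mem_singleton] at hx; omega)
          (isIntervalN_singleton _)
          (by rw [Finset.sum_singleton]; exact hS1)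
          (Or.inr (Finset.card_singleton _))
          (fun B' _ => inter_singleton_card_le _ _) ?_ (Or.inl (by simp))⟩
        intro x
        by_cases hx : x ∈ S
        · have hxb := hS x hx
          simp [mu, hx]
          all_goals first | omega | (split_ifs <;> omega)
        · simp [mu, hx]
          all_goals first | omega | (split_ifs <;> omega)
    · -- wide case
      push_neg at hrun
      have hwlCn : w l ≤ (Finset.Ico 0 n).sum c := le_trans hAw inv1
      obtain ⟨p, hpn, hPp, hmaxp⟩ := widePick hwlCn (by omega)
      have hsplitCp : (Finset.Ico 0 (p + 1)).sum c + (Finset.Ico (p + 1) n).sum c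
          = (Finset.Ico 0 n).sum c :=
        Finset.sum_Ico_consecutive c (by omega) (by omega)
      have hinv1' : (Finset.Ico (l + 1) k).sum w ≤ (Finset.Ico 0 (p + 1)).sum c := by
        omega
      rcases hf with hf1 | hf2
      · -- f = 1
        subst hf1
        obtain ⟨bs, hbs⟩ := ih (l + 1) (p + 1) 1 (S ∪ Finset.Ico (p + 1) (n - 1))
          (by omega) (by omega) (Or.inl rfl)
          (by intro r hr
              simp only [Finset.mem_union, Finset.mem_Ico] at hr
              rcases hr with h | h
              · have := hS r h; omega
              · omega)
          hinv1'
          (by intro _ hS'e hl1k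
              have hSe : S = ∅ := by
                rcases Finset.eq_empty_or_nonempty S with h | h
                · exact h
                · exfalso
                  obtain ⟨y, hy⟩ := h
                  have hy' : y ∈ S ∪ Finset.Ico (p + 1) (n - 1) :=
                    Finset.mem_union_left _ hy
                  rw [hS'e] at hy'
                  exact absurd hy' (Finset.notMem_empty y)
              have hpe : n - 1 ≤ p + 1 := by
                by_contra hcon
                push_neg at hcon
                have hy' : p + 1 ∈ S ∪ Finset.Ico (p + 1) (n - 1) :=
                  Finset.mem_union_right _ (by simp only [Finset.mem_Ico]; omega)
                rw [hS'e] at hy'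
                exact absurd hy' (Finset.notMem_empty _)
              have hre : runEnd w k l (c (n - 1)) = l := runEnd_eq_self hlk hrun
              have h2 := inv2 rfl hSe hlk
              rw [hre, Finset.Ico_self, Finset.sum_empty] at h2
              have hp1 : p + 1 - 1 = p := by omega
              rw [hp1]
              have hsplitC2 : (Finset.Ico 0 (n - 2)).sum c
                  + (Finset.Ico (n - 2) (n - 1)).sum c
                  = (Finset.Ico 0 (n - 1)).sum c :=
                Finset.sum_Ico_consecutive c (by omega) (by omega)
              have hCtop2 : (Finset.Ico (n - 2) (n - 1)).sum c = c (n - 2) :=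
                sum_Ico_pred (by omega)
              have hcc : c (n - 2) ≤ c (n - 1) := hc (n - 2) (n - 1) (by omega) (by omega)
              have hpn2 : p = n - 2 := by omega
              have hgoal : (Finset.Ico (l + 1) k).sum w ≤ (Finset.Ico 0 p).sum c := by
                rw [hpn2]
                omega
              exact le_trans hgoal (Nat.le_add_right _ _))
        refine ⟨_, good_cons (T := Finset.Ico p n) hbs (by omega) (by omega)
          (by intro x hx; simp only [Finset.mem_Ico] at hx; omega)
          (isIntervalN_Ico p n)
          (by rw [hwl1]; exact hPp)
          (Or.inl rfl)
          ?_ ?_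
          (Or.inr (by intro x hx; simp only [Finset.mem_Ico] at hx; omega))⟩
        · intro B' hB'
          rcases hbs.hd B' hB' with h | h
          · calc (Finset.Ico p n ∩ B'.2).card ≤ B'.2.card :=
                Finset.card_le_card Finset.inter_subset_right
              _ ≤ 1 := h
          · have hsub : Finset.Ico p n ∩ B'.2 ⊆ {p} := by
              intro x hx
              simp only [Finset.mem_inter, Finset.mem_Ico, Finset.mem_singleton] at hx ⊢
              have := h x hx.2
              omega
            calc (Finset.Ico p n ∩ B'.2).card ≤ ({p} : Finset ℕ).card :=
                Finset.card_le_card hsub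
              _ = 1 := Finset.card_singleton p
        · intro x
          by_cases hx : x ∈ S
          · have hxb := hS x hx
            simp [mu, hx, Finset.mem_union, Finset.mem_Ico]
            all_goals first | omega | (split_ifs <;> omega)
          · simp [mu, hx, Finset.mem_union, Finset.mem_Ico]
            all_goals first | omega | (split_ifs <;> omega)
      · -- f = 2
        subst hf2
        obtain ⟨bs, hbs⟩ := ih (l + 1) (p + 1) 1
          (insert (n - 1) (S ∪ Finset.Ico (p + 1) (n - 1)))
          (by omega) (by omega) (Or.inl rfl)
          (by intro r hr
              simp only [Finset.mem_insert, Finset.mem_union, Finset.mem_Ico] at hr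
              rcases hr with h | h | h
              · omega
              · have := hS r h; omega
              · omega)
          hinv1'
          (by intro _ hS'e _
              exact absurd hS'e (Finset.insert_ne_empty _ _))
        refine ⟨_, good_cons (T := Finset.Ico p n) hbs (by omega) (by omega)
          (by intro x hx; simp only [Finset.mem_Ico] at hx; omega)
          (isIntervalN_Ico p n)
          (by rw [hwl1]; exact hPp)
          (Or.inl rfl)
          ?_ ?_
          (Or.inr (by intro x hx; simp only [Finset.mem_Ico] at hx; omega))⟩
        · intro B' hB'
          rcases hbs.hd B' hB' with h | h
          · calc (Finset.Ico p n ∩ B'.2).card ≤ B'.2.card :=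
                Finset.card_le_card Finset.inter_subset_right
              _ ≤ 1 := h
          · have hsub : Finset.Ico p n ∩ B'.2 ⊆ {p} := by
              intro x hx
              simp only [Finset.mem_inter, Finset.mem_Ico, Finset.mem_singleton] at hx ⊢
              have := h x hx.2
              omega
            calc (Finset.Ico p n ∩ B'.2).card ≤ ({p} : Finset ℕ).card :=
                Finset.card_le_card hsub
              _ = 1 := Finset.card_singleton p
        · intro x
          by_cases hx : x ∈ S
          · have hxb := hS x hx
            simp [mu, hx, Finset.mem_insert, Finset.mem_union, Finset.mem_Ico]
            all_goals first | omega | (split_ifs <;> omega)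
          · simp [mu, hx, Finset.mem_insert, Finset.mem_union, Finset.mem_Ico]
            all_goals first | omega | (split_ifs <;> omega)

lemma getD_eq {α : Type*} {bs : List α} {j : ℕ} (d : α) (h : j < bs.length) :
    bs.getD j d = bs[j] := by
  simp [List.getD_eq_getElem?_getD, List.getElem?_eq_getElem h]

lemma filter_range_card (P : Finset ℕ × Finset ℕ → Prop) [DecidablePred P]
    (bs : List (Finset ℕ × Finset ℕ)) (d : Finset ℕ × Finset ℕ) :
    ((Finset.range bs.length).filter (fun j => P (bs.getD j d))).card
      = bs.countP (fun B => decide (P B)) := by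
  induction bs with
  | nil => simp
  | cons B bs ih =>
    rw [Finset.card_filter, List.length_cons, Finset.sum_range_succ']
    simp only [List.getD_cons_succ, List.getD_cons_zero, List.countP_cons]
    rw [← Finset.card_filter, ih]
    by_cases hP : P B <;> simp [hP]

lemma filter_val_map {n : ℕ} (s : Finset ℕ) (hs : ∀ x ∈ s, x < n) :
    (Finset.univ.filter (fun i : Fin n => i.val ∈ s)).map Fin.valEmbedding = s := by
  ext x
  simp only [Finset.mem_map, Finset.mem_filter, Finset.mem_univ, true_and,
    Fin.valEmbedding_apply]
  constructor
  · rintro ⟨i, hi, rfl⟩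
    exact hi
  · intro hx
    exact ⟨⟨x, hs x hx⟩, hx, rfl⟩

lemma filter_val_card {n : ℕ} (s : Finset ℕ) (hs : ∀ x ∈ s, x < n) :
    (Finset.univ.filter (fun i : Fin n => i.val ∈ s)).card = s.card := by
  conv_rhs => rw [← filter_val_map s hs]
  rw [Finset.card_map]

lemma filter_val_sum {n : ℕ} (s : Finset ℕ) (hs : ∀ x ∈ s, x < n)
    (g : Fin n → ℕ) (u : ℕ → ℕ) (hgu : ∀ i : Fin n, g i = u i.val) :
    (Finset.univ.filter (fun i : Fin n => i.val ∈ s)).sum g = s.sum u := by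
  conv_rhs => rw [← filter_val_map s hs]
  rw [Finset.sum_map]
  exact Finset.sum_congr rfl fun i _ => by simp [Fin.valEmbedding_apply, hgu i]

lemma card_le_val {n : ℕ} (A : Finset (Fin n)) (s : Finset ℕ)
    (h : ∀ i ∈ A, (i : ℕ) ∈ s) : A.card ≤ s.card :=
  Finset.card_le_card_of_injOn (fun i => (i : ℕ)) h Fin.val_injective.injOn

end PMS

/-- PMS-Partition (abstraction of Lemma 3.3): given a_1 ≥ … ≥ a_k and
b_1 ≤ … ≤ b_m nonnegative integers with Σ (b_j + 1)^M ≥ Σ a_l^M, there is a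
partition of {1,…,k} into consecutive blocks L_1,…,L_t and intervals
L*_1,…,L*_t of {1,…,m}, consecutive L*'s overlapping in at most one index and
each index appearing in at most two of the L*_j, such that for every j
Σ_{i ∈ L*_j} (b_i + 1)^M ≥ Σ_{l ∈ L_j} a_l^M and either |L_j| = 1 or |L*_j| = 1. -/
theorem stmt_9 (k m M : ℕ) (hM : 1 ≤ M)
    (a : Fin k → ℕ) (b : Fin m → ℕ)
    (ha : ∀ i j : Fin k, i ≤ j → a j ≤ a i)
    (hb : ∀ i j : Fin m, i ≤ j → b i ≤ b j)
    (hsum : ∑ l, (a l) ^ M ≤ ∑ j, (b j + 1) ^ M) :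
    ∃ (t : ℕ) (L : ℕ → Finset (Fin k)) (Lstar : ℕ → Finset (Fin m)),
      -- the L_j form a partition of {1,…,k} into consecutive blocks:
      (∀ i : Fin k, ∃ j < t, i ∈ L j) ∧
      (∀ j₁ < t, ∀ j₂ < t, j₁ ≠ j₂ → Disjoint (L j₁) (L j₂)) ∧
      (∀ j < t, IsInterval (L j)) ∧
      -- the L*_j are intervals of {1,…,m}:
      (∀ j < t, IsInterval (Lstar j)) ∧
      -- consecutive intervals overlap in at most one index:
      (∀ j, j + 1 < t → (Lstar j ∩ Lstar (j + 1)).card ≤ 1) ∧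
      -- each index of {1,…,m} appears in at most two of the L*_j:
      (∀ i : Fin m, ((Finset.range t).filter (fun j => i ∈ Lstar j)).card ≤ 2) ∧
      -- dominating sums:
      (∀ j < t, ∑ l ∈ L j, (a l) ^ M ≤ ∑ i ∈ Lstar j, (b i + 1) ^ M) ∧
      -- each block is a singleton on one side:
      (∀ j < t, (L j).card = 1 ∨ (Lstar j).card = 1) := by
  classical
  set w : ℕ → ℕ := fun x => if h : x < k then (a ⟨x, h⟩) ^ M else 0 with hwdef
  set c : ℕ → ℕ := fun x => if h : x < m then (b ⟨x, h⟩ + 1) ^ M else 1 with hcdef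
  have hwv : ∀ i : Fin k, (a i) ^ M = w i.val := by
    intro i
    rw [hwdef]
    simp only []
    rw [dif_pos i.isLt]
  have hcv : ∀ i : Fin m, (b i + 1) ^ M = c i.val := by
    intro i
    rw [hcdef]
    simp only []
    rw [dif_pos i.isLt]
  have hw : ∀ i j, i ≤ j → j < k → w j ≤ w i := by
    intro i j hij hj
    have hi : i < k := lt_of_le_of_lt hij hj
    rw [hwdef]
    simp only []
    rw [dif_pos hj, dif_pos hi]
    exact Nat.pow_le_pow_left (ha ⟨i, hi⟩ ⟨j, hj⟩ hij) M
  have hc : ∀ i j, i ≤ j → j < m → c i ≤ c j := by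
    intro i j hij hj
    have hi : i < m := lt_of_le_of_lt hij hj
    rw [hcdef]
    simp only []
    rw [dif_pos hj, dif_pos hi]
    exact Nat.pow_le_pow_left (Nat.add_le_add_right (hb ⟨i, hi⟩ ⟨j, hj⟩ hij) 1) M
  have hc1 : ∀ i, i < m → 1 ≤ c i := by
    intro i hi
    rw [hcdef]
    simp only []
    rw [dif_pos hi]
    exact Nat.one_le_pow _ _ (Nat.succ_pos _)
  have hkey : ∀ (n : ℕ) (g : Fin n → ℕ) (u : ℕ → ℕ), (∀ i : Fin n, g i = u i.val) →
      ∑ i, g i = (Finset.Ico 0 n).sum u := by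
    intro n g u hgu
    rw [← Finset.range_eq_Ico, ← Fin.sum_univ_eq_sum_range u n]
    exact Finset.sum_congr rfl fun i _ => hgu i
  have hsum' : (Finset.Ico 0 k).sum w ≤ (Finset.Ico 0 m).sum c := by
    rw [← hkey k (fun l => (a l) ^ M) w hwv, ← hkey m (fun j => (b j + 1) ^ M) c hcv]
    exact hsum
  obtain ⟨bs, hbs⟩ := PMS.aux k m w c hw hc hc1 k 0 m 2 ∅ (by omega) le_rfl (Or.inr rfl)
    (fun r hr => absurd hr (Finset.notMem_empty r)) hsum'
    (fun h => absurd h (by norm_num))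
  refine ⟨bs.length,
    fun j => Finset.univ.filter (fun i : Fin k => i.val ∈ (bs.getD j (∅, ∅)).1),
    fun j => Finset.univ.filter (fun i : Fin m => i.val ∈ (bs.getD j (∅, ∅)).2),
    ?_, ?_, ?_, ?_, ?_, ?_, ?_, ?_⟩
  · -- cover
    intro i
    obtain ⟨B, hB, hiB⟩ := hbs.cover i.val (Nat.zero_le _) i.isLt
    obtain ⟨j, hj, hEq⟩ := List.getElem_of_mem hB
    refine ⟨j, hj, ?_⟩
    simp only [Finset.mem_filter, Finset.mem_univ, true_and]
    rw [PMS.getD_eq _ hj, hEq]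
    exact hiB
  · -- disjoint
    intro j1 hj1 j2 hj2 hne
    have key : ∀ u v, ∀ (hu : u < bs.length) (hv : v < bs.length), u < v →
        Disjoint ((bs.getD u (∅, ∅)).1 : Finset ℕ) (bs.getD v (∅, ∅)).1 := by
      intro u v hu hv huv
      have hp := (List.pairwise_iff_get.mp hbs.pw) ⟨u, hu⟩ ⟨v, hv⟩ huv
      rw [PMS.getD_eq _ hu, PMS.getD_eq _ hv]
      simpa [List.get_eq_getElem] using hp
    have hd : Disjoint ((bs.getD j1 (∅, ∅)).1 : Finset ℕ) (bs.getD j2 (∅, ∅)).1 := by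
      rcases Nat.lt_or_ge j1 j2 with h | h
      · exact key j1 j2 hj1 hj2 h
      · exact (key j2 j1 hj2 hj1 (by omega)).symm
    rw [Finset.disjoint_left] at hd ⊢
    intro x hx hx'
    simp only [Finset.mem_filter, Finset.mem_univ, true_and] at hx hx'
    exact hd hx hx'
  · -- L intervals
    intro j hj x hx z hz y hxy hyz
    have hBmem : bs.getD j (∅, ∅) ∈ bs := by
      rw [PMS.getD_eq _ hj]
      exact List.getElem_mem hj
    simp only [Finset.mem_filter, Finset.mem_univ, true_and] at hx hz ⊢
    exact hbs.int1 _ hBmem x.val hx z.val hz y.val (Fin.le_def.mp hxy) (Fin.le_def.mp hyz)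
  · -- Lstar intervals
    intro j hj x hx z hz y hxy hyz
    have hBmem : bs.getD j (∅, ∅) ∈ bs := by
      rw [PMS.getD_eq _ hj]
      exact List.getElem_mem hj
    simp only [Finset.mem_filter, Finset.mem_univ, true_and] at hx hz ⊢
    exact hbs.int2 _ hBmem x.val hx z.val hz y.val (Fin.le_def.mp hxy) (Fin.le_def.mp hyz)
  · -- chain
    intro j hj
    have hj0 : j < bs.length := by omega
    have hch := List.isChain_iff_getElem.mp hbs.ch j (by omega)
    refine le_trans (PMS.card_le_val _
      (((bs.getD j (∅, ∅)).2 ∩ (bs.getD (j + 1) (∅, ∅)).2)) ?_) ?_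
    · intro i hi
      simp only [Finset.mem_inter, Finset.mem_filter, Finset.mem_univ, true_and] at hi ⊢
      exact hi
    · rw [PMS.getD_eq _ hj0, PMS.getD_eq _ hj]
      exact le_trans (Finset.card_le_card (le_refl _)) hch
  · -- multiplicities
    intro i
    have hfc : (Finset.range bs.length).filter
        (fun j => i ∈ Finset.univ.filter (fun i' : Fin m => i'.val ∈ (bs.getD j (∅, ∅)).2))
        = (Finset.range bs.length).filter (fun j => i.val ∈ (bs.getD j (∅, ∅)).2) := by
      apply Finset.filter_congr
      intro j _
      simp
    rw [hfc, PMS.filter_range_card (fun B => i.val ∈ B.2) bs (∅, ∅)]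
    have hcnt := hbs.cnt i.val
    have hmu2 : PMS.mu m 2 ∅ i.val ≤ 2 := by
      simp only [PMS.mu, Finset.notMem_empty, if_false]
      split_ifs <;> omega
    omega
  · -- sums
    intro j hj
    have hBmem : bs.getD j (∅, ∅) ∈ bs := by
      rw [PMS.getD_eq _ hj]
      exact List.getElem_mem hj
    have h5 := hbs.sums _ hBmem
    rw [PMS.filter_val_sum _ (fun x hx => (hbs.mem1 _ hBmem x hx).2) _ w hwv,
      PMS.filter_val_sum _ (fun x hx => hbs.mem2 _ hBmem x hx) _ c hcv]
    exact h5
  · -- singleton condition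
    intro j hj
    have hBmem : bs.getD j (∅, ∅) ∈ bs := by
      rw [PMS.getD_eq _ hj]
      exact List.getElem_mem hj
    rcases hbs.sing _ hBmem with h | h
    · left
      rw [PMS.filter_val_card _ (fun x hx => (hbs.mem1 _ hBmem x hx).2)]
      exact h
    · right
      rw [PMS.filter_val_card _ (fun x hx => hbs.mem2 _ hBmem x hx)]
      exact h
end

section
/- Suppose x is a resource with congestion C_x > ψ where ψ = max(2M, 3C*), and every player π on x (there are C_x of them) has an alternative strategy S*_π with x possibly in it, such that at least C_x − C* of these players satisfy Σ_{y ∈ S*_π} (C_y + 1)^M ≥ C_x^M, each alternative resource y satisfies either C_y > ψ (type V_1) or C_y ≤ ψ (type V_2), and each resource appears in at most C* of the sets S*_π. Then Σ_{y ∈ Ch(x) ∩ V_1} C_y^M + Σ_{y ∈ Ch(x) ∩ V_2} ψ^M ≥ ((C_x − C*)/(2C*)) · C_x^M, where Ch(x) = ∪_π S*_π. -/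
/-- If `2*M ≤ n` then `(n+1)^M ≤ 2*n^M`. -/
lemma aux_pow_expansion (M n : ℕ) (hn : 2 * M ≤ n) :
    ((n : ℝ) + 1) ^ M ≤ 2 * (n : ℝ) ^ M := by
  have hn1 : (0:ℝ) < (n:ℝ) + 1 := by positivity
  have hnn : (2:ℝ) * M ≤ n := by exact_mod_cast hn
  have hb : (1:ℝ) + (M:ℝ) * (-(1/((n:ℝ)+1))) ≤ (1 + (-(1/((n:ℝ)+1))))^M := by
    apply one_add_mul_le_pow
    have h0 : (0:ℝ) ≤ 1/((n:ℝ)+1) := by positivity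
    have h1 : 1/((n:ℝ)+1) ≤ 1 := by
      rw [div_le_one hn1]; linarith
    linarith
  have h2 : (M:ℝ) * (1/((n:ℝ)+1)) ≤ 1/2 := by
    rw [mul_one_div, div_le_div_iff₀ hn1 (by norm_num : (0:ℝ) < 2)]
    linarith
  have heq : (1:ℝ) + (-(1/((n:ℝ)+1))) = (n:ℝ)/((n:ℝ)+1) := by
    field_simp
    ring
  have hhalf : (1:ℝ)/2 ≤ ((n:ℝ)/((n:ℝ)+1))^M := by
    rw [← heq]; linarith
  rw [div_pow, le_div_iff₀ (pow_pos hn1 M)] at hhalf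
  linarith

/-- Expansion lemma (Lemma 4.1): let x be a resource with congestion C_x > ψ,
ψ = max(2M, 3C*), whose players π (indexed by a finite type Pl with |Pl| = C_x)
have alternative strategies S*_π; at least C_x − C* of the players satisfy
Σ_{y ∈ S*_π} (C_y + 1)^M ≥ C_x^M, and every resource lies in at most C* of the
sets S*_π.  With Ch(x) = ∪_π S*_π, V₁ = {y : C_y > ψ}, V₂ = {y : C_y ≤ ψ}:
Σ_{y ∈ Ch(x) ∩ V₁} C_y^M + Σ_{y ∈ Ch(x) ∩ V₂} ψ^M ≥ ((C_x − C*)/(2C*))·C_x^M. -/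
theorem stmt_10 {R : Type*} [DecidableEq R] {Pl : Type*} [Fintype Pl] [DecidableEq Pl]
    (M Cstar : ℕ) (hM : 0 < M) (hCstar : 0 < Cstar)
    (ψ : ℕ) (hψ : ψ = max (2 * M) (3 * Cstar))
    (C : R → ℕ) (x : R) (hx : ψ < C x)
    (Sstar : Pl → Finset R) (hcard : Fintype.card Pl = C x)
    (hmany : C x - Cstar ≤
      (Finset.univ.filter
        (fun π : Pl => (C x) ^ M ≤ ∑ y ∈ Sstar π, (C y + 1) ^ M)).card)
    (hmult : ∀ y : R, (Finset.univ.filter (fun π : Pl => y ∈ Sstar π)).card ≤ Cstar) :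
    (∑ y ∈ (Finset.univ.biUnion Sstar).filter (fun y => ψ < C y), ((C y : ℝ)) ^ M)
      + (∑ y ∈ (Finset.univ.biUnion Sstar).filter (fun y => C y ≤ ψ), ((ψ : ℝ)) ^ M)
      ≥ (((C x : ℝ) - (Cstar : ℝ)) / (2 * (Cstar : ℝ))) * ((C x : ℝ)) ^ M := by
  classical
  set U := Finset.univ.biUnion Sstar with hU
  set f : R → ℝ := fun y => if ψ < C y then ((C y : ℝ))^M else (ψ:ℝ)^M with hf
  have hψ2M : 2 * M ≤ ψ := hψ ▸ le_max_left _ _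
  have hψC : 3 * Cstar ≤ ψ := hψ ▸ le_max_right _ _
  have hfnn : ∀ y, 0 ≤ f y := by
    intro y; simp only [hf]; split <;> positivity
  -- per-player bound
  have hplayer : ∀ π : Pl, (C x)^M ≤ ∑ y ∈ Sstar π, (C y + 1)^M →
      ((C x : ℝ))^M ≤ 2 * ∑ y ∈ Sstar π, f y := by
    intro π hπ
    have h1 : ∀ y ∈ Sstar π, ((C y : ℝ) + 1)^M ≤ 2 * f y := by
      intro y _
      simp only [hf]
      split
      · next h => exact aux_pow_expansion M (C y) (le_trans hψ2M (le_of_lt h))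
      · next h =>
        push_neg at h
        calc ((C y:ℝ)+1)^M ≤ ((ψ:ℝ)+1)^M := by
              apply pow_le_pow_left₀ (by positivity)
              have : (C y : ℝ) ≤ (ψ:ℝ) := by exact_mod_cast h
              linarith
          _ ≤ 2 * (ψ:ℝ)^M := aux_pow_expansion M ψ hψ2M
    calc ((C x:ℝ))^M ≤ ∑ y ∈ Sstar π, ((C y:ℝ)+1)^M := by
          have := hπ; push_cast at this ⊢; exact_mod_cast this
      _ ≤ ∑ y ∈ Sstar π, 2 * f y := Finset.sum_le_sum h1
      _ = 2 * ∑ y ∈ Sstar π, f y := by rw [Finset.mul_sum]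
  set G := Finset.univ.filter
      (fun π : Pl => (C x)^M ≤ ∑ y ∈ Sstar π, (C y + 1)^M) with hG
  have hsum1 : (G.card : ℝ) * (C x:ℝ)^M ≤ 2 * ∑ π ∈ G, ∑ y ∈ Sstar π, f y := by
    calc (G.card : ℝ) * (C x:ℝ)^M = ∑ _π ∈ G, ((C x:ℝ))^M := by
          rw [Finset.sum_const, nsmul_eq_mul]
      _ ≤ ∑ π ∈ G, 2 * ∑ y ∈ Sstar π, f y :=
          Finset.sum_le_sum (fun π hπ => hplayer π (Finset.mem_filter.mp hπ).2)
      _ = 2 * ∑ π ∈ G, ∑ y ∈ Sstar π, f y := by rw [Finset.mul_sum]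
  have hswap : ∑ π ∈ G, ∑ y ∈ Sstar π, f y ≤ (Cstar : ℝ) * ∑ y ∈ U, f y := by
    have hsub : ∀ π : Pl, Sstar π ⊆ U := fun π =>
      Finset.subset_biUnion_of_mem Sstar (Finset.mem_univ π)
    have heq1 : ∀ π ∈ G, ∑ y ∈ Sstar π, f y
        = ∑ y ∈ U, if y ∈ Sstar π then f y else 0 := by
      intro π _
      rw [Finset.sum_ite_mem, Finset.inter_eq_right.mpr (hsub π)]
    rw [Finset.sum_congr rfl heq1, Finset.sum_comm]
    rw [Finset.mul_sum]
    apply Finset.sum_le_sum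
    intro y _
    have : (∑ π ∈ G, if y ∈ Sstar π then f y else 0)
        = ((G.filter (fun π => y ∈ Sstar π)).card : ℝ) * f y := by
      rw [Finset.sum_ite, Finset.sum_const_zero, add_zero, Finset.sum_const,
        nsmul_eq_mul]
    rw [this]
    apply mul_le_mul_of_nonneg_right _ (hfnn y)
    have hle : (G.filter (fun π => y ∈ Sstar π)).card ≤ Cstar := by
      refine le_trans (Finset.card_le_card ?_) (hmult y)
      exact Finset.filter_subset_filter _ (Finset.filter_subset _ _)
    exact_mod_cast hle
  -- combine
  have hCsx : Cstar ≤ C x := by omega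
  have hcardG : ((C x : ℝ) - (Cstar:ℝ)) ≤ (G.card : ℝ) := by
    have : ((C x - Cstar : ℕ) : ℝ) ≤ (G.card : ℝ) := by exact_mod_cast hmany
    rwa [Nat.cast_sub hCsx] at this
  have hCx0 : (0:ℝ) ≤ ((C x:ℝ)) ^ M := by positivity
  have hmain : ((C x:ℝ) - (Cstar:ℝ)) * (C x:ℝ)^M
      ≤ 2 * (Cstar:ℝ) * ∑ y ∈ U, f y := by
    have h1 : ((C x:ℝ) - (Cstar:ℝ)) * (C x:ℝ)^M ≤ (G.card:ℝ) * (C x:ℝ)^M :=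
      mul_le_mul_of_nonneg_right hcardG hCx0
    have h2 : 2 * ∑ π ∈ G, ∑ y ∈ Sstar π, f y ≤ 2 * ((Cstar:ℝ) * ∑ y ∈ U, f y) := by
      linarith
    calc ((C x:ℝ) - (Cstar:ℝ)) * (C x:ℝ)^M ≤ (G.card:ℝ) * (C x:ℝ)^M := h1
      _ ≤ 2 * ∑ π ∈ G, ∑ y ∈ Sstar π, f y := hsum1
      _ ≤ 2 * ((Cstar:ℝ) * ∑ y ∈ U, f y) := h2
      _ = 2 * (Cstar:ℝ) * ∑ y ∈ U, f y := by ring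
  have hsplit : ∑ y ∈ U, f y
      = (∑ y ∈ U.filter (fun y => ψ < C y), ((C y : ℝ)) ^ M)
        + (∑ y ∈ U.filter (fun y => C y ≤ ψ), ((ψ : ℝ)) ^ M) := by
    simp only [hf]
    rw [Finset.sum_ite]
    congr 1
    apply Finset.sum_congr _ (fun _ _ => rfl)
    apply Finset.filter_congr
    intro y _
    simp [not_lt]
  rw [ge_iff_le, div_mul_eq_mul_div, div_le_iff₀ (by positivity : (0:ℝ) < 2 * (Cstar:ℝ))]
  rw [← hsplit]
  calc ((C x:ℝ) - (Cstar:ℝ)) * (C x:ℝ)^M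
      ≤ 2 * (Cstar:ℝ) * ∑ y ∈ U, f y := hmain
    _ = (∑ y ∈ U, f y) * (2 * (Cstar:ℝ)) := by ring
end
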